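/- For m ≥ 4, the 3-percolation number of the grid P₄ □ Pₘ is at least ⌊5(m+1)/3⌋ + 1. -/

import Mathlib

open SimpleGraph

/-- The set of vertices eventually infected in `r`-neighbor bootstrap percolation
on the graph `G`, starting from the initially infected set `A`. -/
inductive Infected {V : Type*} (G : SimpleGraph V) (r : ℕ) (A : Set V) : V → Prop
  | init {v : V} : v ∈ A → Infected G r A v
  | step {v : V} (T : Finset V) : r ≤ T.card → (∀ u ∈ T, G.Adj u v) →
      (∀ u ∈ T, Infected G r A u) → Infected G r A v

/-- `A` is an `r`-percolating set of `G`. -/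
def Percolates {V : Type*} (G : SimpleGraph V) (r : ℕ) (A : Set V) : Prop :=
  ∀ v, Infected G r A v

/-- The `r`-percolation number of `G`: minimum size of an `r`-percolating set. -/
noncomputable def percNum (V : Type*) [Fintype V] (G : SimpleGraph V) (r : ℕ) : ℕ :=
  sInf {k | ∃ A : Finset V, A.card = k ∧ Percolates G r (↑A)}

/-- The `n × m` grid graph `Pₙ □ Pₘ`. -/
def gridGraph (n m : ℕ) : SimpleGraph (Fin n × Fin m) :=
  (pathGraph n) □ (pathGraph m)

/-- A boundary vertex of a grid: degree at most 3. -/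
def IsBoundary {V : Type*} (G : SimpleGraph V) (v : V) : Prop :=
  (G.neighborSet v).ncard ≤ 3

set_option linter.unusedSectionVars false
set_option linter.unusedVariables false

section BootstrapAux

open scoped Classical

variable {V : Type*} [Fintype V]

/-- Ordered pairs `(u, v) ∈ s × t` with `u ~ v`. -/
noncomputable def apairs (G : SimpleGraph V) (s t : Finset V) : Finset (V × V) :=
  (s ×ˢ t).filter fun p => G.Adj p.1 p.2

/-- Number of ordered adjacent pairs inside `B`. -/
noncomputable def dpairs (G : SimpleGraph V) (B : Finset V) : ℕ := (apairs G B B).card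

/-- One step of the 3-neighbour bootstrap process. -/
noncomputable def Fstep (G : SimpleGraph V) (B : Finset V) : Finset V :=
  B ∪ Finset.univ.filter fun v => 3 ≤ (Finset.univ.filter (fun u => G.Adj v u) ∩ B).card

/-- The staged bootstrap process. -/
noncomputable def Sseq (G : SimpleGraph V) (A : Finset V) : ℕ → Finset V
  | 0 => A
  | (k + 1) => Fstep G (Sseq G A k)

lemma mem_apairs {G : SimpleGraph V} {s t : Finset V} {p : V × V} :
    p ∈ apairs G s t ↔ p.1 ∈ s ∧ p.2 ∈ t ∧ G.Adj p.1 p.2 := by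
  simp [apairs, Finset.mem_filter, Finset.mem_product, and_assoc]

lemma subset_Fstep (G : SimpleGraph V) (B : Finset V) : B ⊆ Fstep G B :=
  Finset.subset_union_left

lemma Sseq_mono (G : SimpleGraph V) (A : Finset V) : Monotone (Sseq G A) :=
  monotone_nat_of_le_succ fun k => subset_Fstep G _

lemma mem_Sseq (G : SimpleGraph V) (A : Finset V) {v : V}
    (h : Infected G 3 (↑A) v) : ∃ k, v ∈ Sseq G A k := by
  induction h with
  | init h => exact ⟨0, by simpa [Sseq] using h⟩
  | @step w T hT hadj hinf ih =>
    choose! f hf using ih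
    refine ⟨T.sup f + 1, ?_⟩
    simp only [Sseq]
    refine Finset.mem_union_right _ ?_
    simp only [Finset.mem_filter, Finset.mem_univ, true_and]
    refine le_trans hT (Finset.card_le_card fun u hu => ?_)
    rw [Finset.mem_inter, Finset.mem_filter]
    exact ⟨⟨Finset.mem_univ u, (hadj u hu).symm⟩,
      Sseq_mono G A (Finset.le_sup hu) (hf u hu)⟩

lemma three_le_fiber (G : SimpleGraph V) (B : Finset V) {N : Finset V} (hN : N = Fstep G B \ B)
    {v : V} (hv : v ∈ N) : 3 ≤ (Finset.univ.filter (fun u => G.Adj v u) ∩ B).card := by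
  subst hN
  rw [Finset.mem_sdiff] at hv
  obtain ⟨hv1, hv2⟩ := hv
  rcases Finset.mem_union.mp hv1 with h | h
  · exact absurd h hv2
  · simpa using (Finset.mem_filter.mp h).2

lemma card_apairs_left (G : SimpleGraph V) (B N : Finset V)
    (h : ∀ v ∈ N, 3 ≤ (Finset.univ.filter (fun u => G.Adj v u) ∩ B).card) :
    3 * N.card ≤ (apairs G N B).card := by
  rw [Finset.card_eq_sum_card_fiberwise (f := Prod.fst) (t := N)
    (fun p hp => (mem_apairs.mp hp).1)]
  calc 3 * N.card = ∑ _v ∈ N, 3 := by simp [mul_comm]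
    _ ≤ _ := by
        refine Finset.sum_le_sum fun v hv => ?_
        refine le_trans (h v hv) ?_
        refine Finset.card_le_card_of_injOn (fun u => (v, u)) ?_ ?_
        · intro u hu
          simp only [Finset.mem_coe, Finset.mem_inter, Finset.mem_filter] at hu
          simp only [Finset.mem_coe, Finset.mem_filter, mem_apairs]
          exact ⟨⟨hv, hu.2, hu.1.2⟩, trivial⟩
        · intro a _ b _ hab
          simpa using congrArg Prod.snd hab

lemma card_apairs_right (G : SimpleGraph V) (B N : Finset V)
    (h : ∀ v ∈ N, 3 ≤ (Finset.univ.filter (fun u => G.Adj v u) ∩ B).card) :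
    3 * N.card ≤ (apairs G B N).card := by
  rw [Finset.card_eq_sum_card_fiberwise (f := Prod.snd) (t := N)
    (fun p hp => (mem_apairs.mp hp).2.1)]
  calc 3 * N.card = ∑ _v ∈ N, 3 := by simp [mul_comm]
    _ ≤ _ := by
        refine Finset.sum_le_sum fun v hv => ?_
        refine le_trans (h v hv) ?_
        refine Finset.card_le_card_of_injOn (fun u => (u, v)) ?_ ?_
        · intro u hu
          simp only [Finset.mem_coe, Finset.mem_inter, Finset.mem_filter] at hu
          simp only [Finset.mem_coe, Finset.mem_filter, mem_apairs]
          exact ⟨⟨hu.2, hv, hu.1.2.symm⟩, trivial⟩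
        · intro a _ b _ hab
          simpa using congrArg Prod.fst hab

lemma dpairs_Fstep (G : SimpleGraph V) (B : Finset V) :
    6 * (Fstep G B).card + dpairs G B ≤ 6 * B.card + dpairs G (Fstep G B) := by
  set N : Finset V := Fstep G B \ B with hN
  have hBsub : B ⊆ Fstep G B := subset_Fstep G B
  have hcard : N.card + B.card = (Fstep G B).card := by
    rw [hN]; exact Finset.card_sdiff_add_card_eq_card hBsub
  have hNB : Disjoint N B := Finset.sdiff_disjoint
  have hfib : ∀ v ∈ N, 3 ≤ (Finset.univ.filter (fun u => G.Adj v u) ∩ B).card :=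
    fun v hv => three_le_fiber G B hN hv
  have hNsub : N ⊆ Fstep G B := hN ▸ Finset.sdiff_subset
  have hsub : (apairs G B B ∪ apairs G N B) ∪ apairs G B N
      ⊆ apairs G (Fstep G B) (Fstep G B) := by
    intro p hp
    rw [mem_apairs]
    rcases Finset.mem_union.mp hp with hp | hp
    · rcases Finset.mem_union.mp hp with hp | hp <;> rw [mem_apairs] at hp
      · exact ⟨hBsub hp.1, hBsub hp.2.1, hp.2.2⟩
      · exact ⟨hNsub hp.1, hBsub hp.2.1, hp.2.2⟩
    · rw [mem_apairs] at hp
      exact ⟨hBsub hp.1, hNsub hp.2.1, hp.2.2⟩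
  have hd1 : Disjoint (apairs G B B) (apairs G N B) := by
    rw [Finset.disjoint_left]
    intro p hp hp'
    exact (Finset.disjoint_right.mp hNB) (mem_apairs.mp hp).1 (mem_apairs.mp hp').1
  have hd2 : Disjoint (apairs G B B ∪ apairs G N B) (apairs G B N) := by
    rw [Finset.disjoint_left]
    intro p hp hp'
    have h2 : p.2 ∈ N := (mem_apairs.mp hp').2.1
    rcases Finset.mem_union.mp hp with hp | hp <;>
      exact (Finset.disjoint_right.mp hNB) (mem_apairs.mp hp).2.1 h2
  have hcards := Finset.card_le_card hsub
  rw [Finset.card_union_of_disjoint hd2, Finset.card_union_of_disjoint hd1] at hcards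
  have h1 := card_apairs_left G B N hfib
  have h2 := card_apairs_right G B N hfib
  unfold dpairs at *
  omega

lemma Sseq_ineq (G : SimpleGraph V) (A : Finset V) (k : ℕ) :
    6 * (Sseq G A k).card + dpairs G A ≤ 6 * A.card + dpairs G (Sseq G A k) := by
  induction k with
  | zero => simp [Sseq]
  | succ k ih =>
    have h := dpairs_Fstep G (Sseq G A k)
    simp only [Sseq]
    omega

lemma perc_ineq (G : SimpleGraph V) (A : Finset V) (h : Percolates G 3 ↑A) :
    6 * Fintype.card V + dpairs G A ≤ 6 * A.card + dpairs G Finset.univ := by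
  have h1 : ∀ v : V, ∃ k, v ∈ Sseq G A k := fun v => mem_Sseq G A (h v)
  choose f hf using h1
  have hK : Sseq G A (Finset.univ.sup f) = Finset.univ :=
    Finset.eq_univ_of_forall fun v => Sseq_mono G A (Finset.le_sup (Finset.mem_univ v)) (hf v)
  have := Sseq_ineq G A (Finset.univ.sup f)
  rwa [hK, Finset.card_univ] at this

lemma path_degree_le (n : ℕ) (j : Fin n) : (pathGraph n).degree j ≤ 2 := by
  rw [SimpleGraph.degree]
  calc ((pathGraph n).neighborFinset j).card
      ≤ ({j.val - 1, j.val + 1} : Finset ℕ).card := by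
        refine Finset.card_le_card_of_injOn Fin.val ?_ Fin.val_injective.injOn
        intro u hu
        rw [Finset.mem_coe, SimpleGraph.mem_neighborFinset, pathGraph_adj] at hu
        simp only [Finset.mem_coe, Finset.mem_insert, Finset.mem_singleton]
        omega
    _ ≤ 2 := Finset.card_insert_le _ _

lemma path_degree_zero (n : ℕ) (h2 : 2 ≤ n) : (pathGraph n).degree ⟨0, by omega⟩ ≤ 1 := by
  rw [SimpleGraph.degree]
  calc ((pathGraph n).neighborFinset ⟨0, by omega⟩).card
      ≤ ({1} : Finset ℕ).card := by
        refine Finset.card_le_card_of_injOn Fin.val ?_ Fin.val_injective.injOn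
        intro u hu
        rw [Finset.mem_coe, SimpleGraph.mem_neighborFinset, pathGraph_adj] at hu
        have hu' : 0 + 1 = u.val ∨ u.val + 1 = 0 := hu
        simp only [Finset.mem_coe, Finset.mem_singleton]
        omega
    _ ≤ 1 := by simp

lemma path_degree_last (n : ℕ) (h2 : 2 ≤ n) : (pathGraph n).degree ⟨n - 1, by omega⟩ ≤ 1 := by
  rw [SimpleGraph.degree]
  calc ((pathGraph n).neighborFinset ⟨n - 1, by omega⟩).card
      ≤ ({n - 2} : Finset ℕ).card := by
        refine Finset.card_le_card_of_injOn Fin.val ?_ Fin.val_injective.injOn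
        intro u hu
        rw [Finset.mem_coe, SimpleGraph.mem_neighborFinset, pathGraph_adj] at hu
        have hu' : (n - 1) + 1 = u.val ∨ u.val + 1 = n - 1 := hu
        have := u.isLt
        simp only [Finset.mem_coe, Finset.mem_singleton]
        omega
    _ ≤ 1 := by simp

lemma path_degree_sum (n : ℕ) (h2 : 2 ≤ n) :
    (∑ j : Fin n, (pathGraph n).degree j) + 2 ≤ 2 * n := by
  set z0 : Fin n := ⟨0, by omega⟩ with hz0
  set zl : Fin n := ⟨n - 1, by omega⟩ with hzl
  have hne : z0 ≠ zl := by
    simp only [hz0, hzl, ne_eq, Fin.mk.injEq]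
    omega
  have hsub : ({z0, zl} : Finset (Fin n)) ⊆ Finset.univ := Finset.subset_univ _
  have hsplit : ∑ j ∈ (Finset.univ \ ({z0, zl} : Finset (Fin n))), (pathGraph n).degree j
      + ∑ j ∈ ({z0, zl} : Finset (Fin n)), (pathGraph n).degree j
      = ∑ j : Fin n, (pathGraph n).degree j := Finset.sum_sdiff hsub
  have hpair : ∑ j ∈ ({z0, zl} : Finset (Fin n)), (pathGraph n).degree j ≤ 2 := by
    rw [Finset.sum_pair hne]
    have ha : (pathGraph n).degree z0 ≤ 1 := path_degree_zero n h2
    have hb : (pathGraph n).degree zl ≤ 1 := path_degree_last n h2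
    omega
  have hrest : ∑ j ∈ (Finset.univ \ ({z0, zl} : Finset (Fin n))), (pathGraph n).degree j
      ≤ (Finset.univ \ ({z0, zl} : Finset (Fin n))).card * 2 := by
    have := Finset.sum_le_card_nsmul (Finset.univ \ ({z0, zl} : Finset (Fin n)))
      (fun j => (pathGraph n).degree j) 2 (fun x _ => path_degree_le n x)
    simpa [smul_eq_mul] using this
  have hcard : (Finset.univ \ ({z0, zl} : Finset (Fin n))).card = n - 2 := by
    rw [Finset.card_sdiff_of_subset hsub, Finset.card_univ, Fintype.card_fin, Finset.card_pair hne]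
  omega

lemma dpairs_univ_eq (G : SimpleGraph V) :
    dpairs G Finset.univ = ∑ v : V, G.degree v := by
  rw [dpairs, Finset.card_eq_sum_card_fiberwise (f := Prod.fst) (t := Finset.univ)
    (fun p _ => Finset.mem_univ _)]
  refine Finset.sum_congr rfl fun v _ => ?_
  have hset : (apairs G Finset.univ Finset.univ).filter (fun p => p.1 = v)
      = {v} ×ˢ G.neighborFinset v := by
    ext ⟨a, b⟩
    simp only [apairs, Finset.mem_filter, Finset.mem_product, Finset.mem_univ, true_and,
      Finset.mem_singleton, SimpleGraph.mem_neighborFinset]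
    constructor
    · rintro ⟨hadj, rfl⟩; exact ⟨rfl, hadj⟩
    · rintro ⟨rfl, hadj⟩; exact ⟨hadj, rfl⟩
  rw [hset, Finset.card_product, Finset.card_singleton, one_mul, SimpleGraph.degree]

lemma dpairs_grid_univ (m : ℕ) (hm : 4 ≤ m) :
    dpairs (gridGraph 4 m) Finset.univ + 8 ≤ 14 * m := by
  rw [dpairs_univ_eq]
  have hdeg : ∀ v : Fin 4 × Fin m,
      (gridGraph 4 m).degree v = (pathGraph 4).degree v.1 + (pathGraph m).degree v.2 := by
    intro v
    have := SimpleGraph.degree_boxProd (G := pathGraph 4) (H := pathGraph m) v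
    convert this using 2
    rfl
  have hsum : ∑ v : Fin 4 × Fin m, (gridGraph 4 m).degree v
      = m * (∑ i : Fin 4, (pathGraph 4).degree i)
        + 4 * (∑ j : Fin m, (pathGraph m).degree j) := by
    simp only [hdeg]
    rw [Fintype.sum_prod_type]
    simp only [Finset.sum_add_distrib, Finset.sum_const, Finset.card_univ, Fintype.card_fin,
      smul_eq_mul, Finset.mul_sum]
    congr 1
    · refine Finset.sum_congr rfl fun i _ => ?_
      rw [Finset.sum_congr rfl (g := fun _ => (pathGraph 4).degree i) (fun j _ => by convert rfl)]
      simp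
    · rw [Finset.sum_comm]
      refine Finset.sum_congr rfl fun j _ => ?_
      rw [Finset.sum_congr rfl (g := fun _ => (pathGraph m).degree j) (fun i _ => by convert rfl)]
      simp
  rw [hsum]
  have h4 := path_degree_sum 4 (by omega)
  have hmm := path_degree_sum m (by omega)
  have h1 : m * (∑ i : Fin 4, (pathGraph 4).degree i) ≤ m * 6 :=
    Nat.mul_le_mul_left m (by omega)
  set X := m * (∑ i : Fin 4, (pathGraph 4).degree i) with hX
  omega

lemma two_nbr_mem {W : Type*} (G : SimpleGraph W) (A : Set W) {c x y : W}
    (hc : ∀ u, G.Adj u c → u = x ∨ u = y) (h : Infected G 3 A c) : c ∈ A := by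
  cases h with
  | init h => exact h
  | step T hT hadj _ =>
    exfalso
    have hsub : T ⊆ {x, y} := by
      intro u hu
      rcases hc u (hadj u hu) with rfl | rfl <;> simp
    have h1 := Finset.card_le_card hsub
    have h2 : ({x, y} : Finset W).card ≤ 2 := Finset.card_insert_le _ _
    omega

lemma pair_mem {W : Type*} (G : SimpleGraph W) (A : Set W) {p q a b c d : W}
    (hp : ∀ u, G.Adj u p → u = a ∨ u = b ∨ u = q)
    (hq : ∀ u, G.Adj u q → u = c ∨ u = d ∨ u = p)
    (h : Infected G 3 A p) : p ∈ A ∨ q ∈ A := by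
  suffices H : ∀ v, Infected G 3 A v → (v = p ∨ v = q) → (p ∈ A ∨ q ∈ A) from
    H p h (Or.inl rfl)
  intro v hv
  induction hv with
  | @init w hw => rintro (rfl | rfl); exacts [Or.inl hw, Or.inr hw]
  | @step w T hT hadj hinf ih =>
    rintro (rfl | rfl)
    · by_cases hqT : q ∈ T
      · exact ih q hqT (Or.inr rfl)
      · exfalso
        have hsub : T ⊆ {a, b} := by
          intro u hu
          rcases hp u (hadj u hu) with rfl | rfl | rfl
          · simp
          · simp
          · exact absurd hu hqT
        have h1 := Finset.card_le_card hsub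
        have h2 : ({a, b} : Finset W).card ≤ 2 := Finset.card_insert_le _ _
        omega
    · by_cases hpT : p ∈ T
      · exact ih p hpT (Or.inl rfl)
      · exfalso
        have hsub : T ⊆ {c, d} := by
          intro u hu
          rcases hq u (hadj u hu) with rfl | rfl | rfl
          · simp
          · simp
          · exact absurd hu hpT
        have h1 := Finset.card_le_card hsub
        have h2 : ({c, d} : Finset W).card ≤ 2 := Finset.card_insert_le _ _
        omega

lemma grid_adj {m : ℕ} {a b : Fin 4 × Fin m} :
    (gridGraph 4 m).Adj a b ↔
      ((pathGraph 4).Adj a.1 b.1 ∧ a.2 = b.2) ∨ ((pathGraph m).Adj a.2 b.2 ∧ a.1 = b.1) :=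
  Iff.rfl

lemma col_edge {m : ℕ} (hm : 4 ≤ m) (A : Finset (Fin 4 × Fin m))
    (hA : Percolates (gridGraph 4 m) 3 ↑A) (j j' : Fin m)
    (hj : ∀ u : Fin m, (pathGraph m).Adj u j → u = j') :
    ∃ p q : Fin 4 × Fin m, p ∈ A ∧ q ∈ A ∧ (gridGraph 4 m).Adj p q ∧ p.2 = j ∧ q.2 = j := by
  set i0 : Fin 4 := ⟨0, by omega⟩
  set i1 : Fin 4 := ⟨1, by omega⟩
  set i2 : Fin 4 := ⟨2, by omega⟩
  set i3 : Fin 4 := ⟨3, by omega⟩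
  have hc0 : (i0, j) ∈ A := by
    refine Finset.mem_coe.mp (two_nbr_mem (gridGraph 4 m) ↑A (x := (i1, j)) (y := (i0, j'))
      ?_ (hA _))
    rintro ⟨u1, u2⟩ hu
    rcases grid_adj.mp hu with ⟨hp4, he⟩ | ⟨hpm, he⟩
    · left
      have : u1.val + 1 = (0:ℕ) ∨ (0:ℕ) + 1 = u1.val := pathGraph_adj.mp hp4
      have hu1 : u1 = i1 := by
        apply Fin.ext; simp only [i1]; omega
      simp only at he
      rw [hu1, he]
    · right
      have hu2 : u2 = j' := hj u2 hpm
      simp only at he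
      rw [hu2, he]
  have hc3 : (i3, j) ∈ A := by
    refine Finset.mem_coe.mp (two_nbr_mem (gridGraph 4 m) ↑A (x := (i2, j)) (y := (i3, j'))
      ?_ (hA _))
    rintro ⟨u1, u2⟩ hu
    rcases grid_adj.mp hu with ⟨hp4, he⟩ | ⟨hpm, he⟩
    · left
      have : u1.val + 1 = (3:ℕ) ∨ (3:ℕ) + 1 = u1.val := pathGraph_adj.mp hp4
      have hlt := u1.isLt
      have hu1 : u1 = i2 := by
        apply Fin.ext; simp only [i2]; omega
      simp only at he
      rw [hu1, he]
    · right
      have hu2 : u2 = j' := hj u2 hpm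
      simp only at he
      rw [hu2, he]
  have hpair : (i1, j) ∈ A ∨ (i2, j) ∈ A := by
    have := pair_mem (gridGraph 4 m) (↑A : Set (Fin 4 × Fin m))
      (p := (i1, j)) (q := (i2, j)) (a := (i0, j)) (b := (i1, j')) (c := (i3, j)) (d := (i2, j'))
      ?_ ?_ (hA _)
    · rcases this with h | h
      · exact Or.inl (Finset.mem_coe.mp h)
      · exact Or.inr (Finset.mem_coe.mp h)
    · rintro ⟨u1, u2⟩ hu
      rcases grid_adj.mp hu with ⟨hp4, he⟩ | ⟨hpm, he⟩
      · have : u1.val + 1 = (1:ℕ) ∨ (1:ℕ) + 1 = u1.val := pathGraph_adj.mp hp4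
        simp only at he
        rcases this with h1 | h1
        · left; have hu1 : u1 = i0 := by apply Fin.ext; simp only [i0]; omega
          rw [hu1, he]
        · right; right; have hu1 : u1 = i2 := by apply Fin.ext; simp only [i2]; omega
          rw [hu1, he]
      · right; left
        have hu2 : u2 = j' := hj u2 hpm
        simp only at he
        rw [hu2, he]
    · rintro ⟨u1, u2⟩ hu
      rcases grid_adj.mp hu with ⟨hp4, he⟩ | ⟨hpm, he⟩
      · have : u1.val + 1 = (2:ℕ) ∨ (2:ℕ) + 1 = u1.val := pathGraph_adj.mp hp4
        simp only at he
        rcases this with h1 | h1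
        · right; right; have hu1 : u1 = i1 := by apply Fin.ext; simp only [i1]; omega
          rw [hu1, he]
        · left; have hu1 : u1 = i3 := by apply Fin.ext; simp only [i3]; omega
          rw [hu1, he]
      · right; left
        have hu2 : u2 = j' := hj u2 hpm
        simp only at he
        rw [hu2, he]
  have hadj01 : (gridGraph 4 m).Adj (i0, j) (i1, j) := by
    apply grid_adj.mpr
    left
    exact ⟨pathGraph_adj.mpr (Or.inl rfl), rfl⟩
  have hadj23 : (gridGraph 4 m).Adj (i2, j) (i3, j) := by
    apply grid_adj.mpr
    left
    exact ⟨pathGraph_adj.mpr (Or.inl rfl), rfl⟩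
  rcases hpair with h | h
  · exact ⟨(i0, j), (i1, j), hc0, h, hadj01, rfl, rfl⟩
  · exact ⟨(i2, j), (i3, j), h, hc3, hadj23, rfl, rfl⟩

lemma dpairs_A {m : ℕ} (hm : 4 ≤ m) (A : Finset (Fin 4 × Fin m))
    (hA : Percolates (gridGraph 4 m) 3 ↑A) : 4 ≤ dpairs (gridGraph 4 m) A := by
  have h0 : ∀ u : Fin m, (pathGraph m).Adj u (⟨0, by omega⟩ : Fin m) → u = ⟨1, by omega⟩ := by
    intro u hu
    have h' : u.val + 1 = 0 ∨ 0 + 1 = u.val := pathGraph_adj.mp hu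
    apply Fin.ext
    show u.val = 1
    omega
  have hl : ∀ u : Fin m, (pathGraph m).Adj u (⟨m - 1, by omega⟩ : Fin m)
      → u = ⟨m - 2, by omega⟩ := by
    intro u hu
    have h' : u.val + 1 = m - 1 ∨ (m - 1) + 1 = u.val := pathGraph_adj.mp hu
    have := u.isLt
    apply Fin.ext
    show u.val = m - 2
    omega
  obtain ⟨p, q, hp, hq, hpq, hp2, hq2⟩ := col_edge hm A hA ⟨0, by omega⟩ ⟨1, by omega⟩ h0
  obtain ⟨r, s, hr, hs, hrs, hr2, hs2⟩ :=
    col_edge hm A hA ⟨m - 1, by omega⟩ ⟨m - 2, by omega⟩ hl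
  have hcol : ((⟨0, by omega⟩ : Fin m)) ≠ ⟨m - 1, by omega⟩ := by
    intro h
    have h' : (0 : ℕ) = m - 1 := congrArg Fin.val h
    omega
  have hx : ∀ x y : Fin 4 × Fin m, x.2 = (⟨0, by omega⟩ : Fin m)
      → y.2 = (⟨m - 1, by omega⟩ : Fin m) → x ≠ y := by
    intro x y hx2 hy2 h
    apply hcol
    rw [← hx2, h, hy2]
  have hpr := hx p r hp2 hr2
  have hps := hx p s hp2 hs2
  have hqr := hx q r hq2 hr2
  have hqs := hx q s hq2 hs2
  have hne1 : p ≠ q := hpq.ne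
  have hne2 : r ≠ s := hrs.ne
  have hm1 : ((p, q) : _ × _) ∉ ({(q, p), (r, s), (s, r)} :
      Finset ((Fin 4 × Fin m) × (Fin 4 × Fin m))) := by
    simp only [Finset.mem_insert, Finset.mem_singleton]
    push_neg
    refine ⟨fun h => hne1 (congrArg Prod.fst h), fun h => hpr (congrArg Prod.fst h),
      fun h => hps (congrArg Prod.fst h)⟩
  have hm2 : ((q, p) : _ × _) ∉ ({(r, s), (s, r)} :
      Finset ((Fin 4 × Fin m) × (Fin 4 × Fin m))) := by
    simp only [Finset.mem_insert, Finset.mem_singleton]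
    push_neg
    exact ⟨fun h => hqr (congrArg Prod.fst h), fun h => hqs (congrArg Prod.fst h)⟩
  have hm3 : ((r, s) : _ × _) ∉ ({(s, r)} :
      Finset ((Fin 4 × Fin m) × (Fin 4 × Fin m))) := by
    simp only [Finset.mem_singleton]
    exact fun h => hne2 (congrArg Prod.fst h)
  have hcard : ({(p, q), (q, p), (r, s), (s, r)} :
      Finset ((Fin 4 × Fin m) × (Fin 4 × Fin m))).card = 4 := by
    rw [Finset.card_insert_of_notMem hm1, Finset.card_insert_of_notMem hm2,
      Finset.card_insert_of_notMem hm3, Finset.card_singleton]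
  have hsub : ({(p, q), (q, p), (r, s), (s, r)} :
      Finset ((Fin 4 × Fin m) × (Fin 4 × Fin m))) ⊆ apairs (gridGraph 4 m) A A := by
    intro x hx'
    simp only [Finset.mem_insert, Finset.mem_singleton] at hx'
    rcases hx' with rfl | rfl | rfl | rfl <;> rw [mem_apairs]
    · exact ⟨hp, hq, hpq⟩
    · exact ⟨hq, hp, hpq.symm⟩
    · exact ⟨hr, hs, hrs⟩
    · exact ⟨hs, hr, hrs.symm⟩
  calc (4 : ℕ) = _ := hcard.symm
    _ ≤ _ := Finset.card_le_card hsub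

end BootstrapAux

theorem stmt_17 (m : ℕ) (hm : 4 ≤ m) :
    5 * (m + 1) / 3 + 1 ≤ percNum (Fin 4 × Fin m) (gridGraph 4 m) 3 := by
  classical
  have hne : {k | ∃ A : Finset (Fin 4 × Fin m), A.card = k
      ∧ Percolates (gridGraph 4 m) 3 ↑A}.Nonempty := by
    refine ⟨(Finset.univ : Finset (Fin 4 × Fin m)).card, Finset.univ, rfl,
      fun v => Infected.init ?_⟩
    simp
  unfold percNum
  obtain ⟨A, hAc, hAp⟩ := Nat.sInf_mem hne
  rw [← hAc]
  have h1 := perc_ineq (gridGraph 4 m) A hAp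
  have h2 := dpairs_grid_univ m hm
  have h3 := dpairs_A hm A hAp
  have h4 : Fintype.card (Fin 4 × Fin m) = 4 * m := by simp
  rw [h4] at h1
  omega
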